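/- Let a, b ⊆ {1,…,d} and let x, z, w be independent random vectors, each uniformly distributed on [0,1]^d. Then E[ f(x_a : z_{-a}) · f(x_b : w_{-b}) ] = μ² + τ̲²_{a∩b}. That is, the expected product of f evaluated at two random points that share exactly the coordinates in a∩b equals μ² plus the lower Sobol' index of the shared coordinate set. -/

import Mathlib

open MeasureTheory Finset

/-- The uniform (Lebesgue) probability measure on the interval `[0,1]`. -/
noncomputable def unifSeg : Measure ℝ := (volume : Measure ℝ).restrict (Set.Icc 0 1)

/-- The uniform (Lebesgue) product probability measure on the cube `[0,1]^d`. -/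
noncomputable def unifCube (d : ℕ) : Measure (Fin d → ℝ) :=
  Measure.pi fun _ => unifSeg

/-- `glue u x y` is the point whose `j`-th coordinate is `x j` for `j ∈ u`
and `y j` otherwise, i.e. `(x_u : y_{-u})`. -/
def glue {d : ℕ} (u : Finset (Fin d)) (x y : Fin d → ℝ) : Fin d → ℝ :=
  fun j => if j ∈ u then x j else y j

/-- The lower Sobol' index `τ̲²_u` of the set `u`. -/
noncomputable def lowerSobol {d : ℕ} (f : (Fin d → ℝ) → ℝ) (u : Finset (Fin d)) : ℝ :=
  (∫ x, (∫ y, f (glue u x y) ∂(unifCube d)) ^ 2 ∂(unifCube d))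
    - (∫ x, f x ∂(unifCube d)) ^ 2

/-- The variance `σ²` of `f` over the unit cube. -/
noncomputable def sigmaSq {d : ℕ} (f : (Fin d → ℝ) → ℝ) : ℝ :=
  (∫ x, f x ^ 2 ∂(unifCube d)) - (∫ x, f x ∂(unifCube d)) ^ 2

/-- The upper Sobol' index `τ̄²_u = σ² - τ̲²_{uᶜ}` of the set `u`. -/
noncomputable def upperSobol {d : ℕ} (f : (Fin d → ℝ) → ℝ) (u : Finset (Fin d)) : ℝ :=
  sigmaSq f - lowerSobol f uᶜ

instance : IsProbabilityMeasure unifSeg :=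
  ⟨by simp [unifSeg, Real.volume_Icc]⟩

instance (d : ℕ) : IsProbabilityMeasure (unifCube d) := by
  unfold unifCube; infer_instance

theorem mp_fst {α β : Type*} [MeasurableSpace α] [MeasurableSpace β] (μ : Measure α)
    (ν : Measure β) [IsProbabilityMeasure ν] :
    MeasurePreserving (Prod.fst : α × β → α) (μ.prod ν) μ :=
  ⟨measurable_fst, Measure.fst_prod⟩

theorem mp_snd {α β : Type*} [MeasurableSpace α] [MeasurableSpace β] (μ : Measure α)
    (ν : Measure β) [IsProbabilityMeasure μ] [SFinite ν] :
    MeasurePreserving (Prod.snd : α × β → β) (μ.prod ν) ν :=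
  ⟨measurable_snd, Measure.snd_prod⟩

theorem mp_integral {α β : Type*} [MeasurableSpace α] [MeasurableSpace β]
    {μ : Measure α} {ν : Measure β} {φ : α → β} (hφ : MeasurePreserving φ μ ν)
    {g : β → ℝ} (hg : AEStronglyMeasurable g ν) :
    ∫ x, g (φ x) ∂μ = ∫ y, g y ∂ν := by
  rw [← hφ.map_eq] at hg ⊢
  exact (integral_map hφ.aemeasurable hg).symm

theorem glue_mp {d : ℕ} (u : Finset (Fin d)) :
    MeasurePreserving (fun p : (Fin d → ℝ) × (Fin d → ℝ) => glue u p.1 p.2)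
      ((unifCube d).prod (unifCube d)) (unifCube d) := by
  classical
  have he := measurePreserving_piEquivPiSubtypeProd (fun _ : Fin d => unifSeg) (fun j => j ∈ u)
  set e := MeasurableEquiv.piEquivPiSubtypeProd (fun _ : Fin d => ℝ) (fun j => j ∈ u) with hedef
  have h1 := (mp_fst _ _).comp he
  have h2 := (mp_snd _ _).comp he
  have h4 : (fun p : (Fin d → ℝ) × (Fin d → ℝ) => glue u p.1 p.2)
      = ⇑e.symm ∘ Prod.map (Prod.fst ∘ ⇑e) (Prod.snd ∘ ⇑e) := by
    funext p
    funext j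
    by_cases h : j ∈ u <;>
      simp [glue, h, hedef, MeasurableEquiv.piEquivPiSubtypeProd, Equiv.piEquivPiSubtypeProd]
  rw [h4]
  exact (MeasurePreserving.symm e he).comp (h1.prod h2)

theorem middle_mp {α β : Type*} [MeasurableSpace α] [MeasurableSpace β]
    (μ : Measure α) (κ : Measure β) [SFinite μ] [SFinite κ] :
    MeasurePreserving
      (fun q : (α × β) × α × β => ((q.2.1, q.1.2), (q.1.1, q.2.2)))
      ((μ.prod κ).prod (μ.prod κ)) ((μ.prod κ).prod (μ.prod κ)) := by
  have h1 := measurePreserving_prodAssoc μ κ (μ.prod κ)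
  have h2 := (MeasurePreserving.id μ).prod
    ((measurePreserving_prodAssoc κ μ κ).symm MeasurableEquiv.prodAssoc)
  have h3 := (MeasurePreserving.id μ).prod
    ((Measure.measurePreserving_swap (μ:=κ) (ν:=μ)).prod (MeasurePreserving.id κ))
  have h4 := (MeasurePreserving.id μ).prod (measurePreserving_prodAssoc μ κ κ)
  have h5 := (measurePreserving_prodAssoc μ μ (κ.prod κ)).symm MeasurableEquiv.prodAssoc
  have h6 := (Measure.measurePreserving_swap (μ:=μ) (ν:=μ)).prod (MeasurePreserving.id (κ.prod κ))
  have h7 := measurePreserving_prodAssoc μ μ (κ.prod κ)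
  have h8 := (MeasurePreserving.id μ).prod
    ((measurePreserving_prodAssoc μ κ κ).symm MeasurableEquiv.prodAssoc)
  have h9 := (MeasurePreserving.id μ).prod
    ((Measure.measurePreserving_swap (μ:=μ) (ν:=κ)).prod (MeasurePreserving.id κ))
  have h10 := (MeasurePreserving.id μ).prod (measurePreserving_prodAssoc κ μ κ)
  have h11 := (measurePreserving_prodAssoc μ κ (μ.prod κ)).symm MeasurableEquiv.prodAssoc
  exact h11.comp (h10.comp (h9.comp (h8.comp (h7.comp (h6.comp (h5.comp
    (h4.comp (h3.comp (h2.comp h1)))))))))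

theorem swapGlue_mp {d : ℕ} (v : Finset (Fin d)) :
    MeasurePreserving
      (fun p : (Fin d → ℝ) × (Fin d → ℝ) => (glue v p.2 p.1, glue v p.1 p.2))
      ((unifCube d).prod (unifCube d)) ((unifCube d).prod (unifCube d)) := by
  classical
  have he := measurePreserving_piEquivPiSubtypeProd (fun _ : Fin d => unifSeg) (fun j => j ∈ v)
  set e := MeasurableEquiv.piEquivPiSubtypeProd (fun _ : Fin d => ℝ) (fun j => j ∈ v) with hedef
  have htot := ((MeasurePreserving.symm e he).prod (MeasurePreserving.symm e he)).comp
      ((middle_mp _ _).comp (he.prod he))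
  have h4 : (fun p : (Fin d → ℝ) × (Fin d → ℝ) => (glue v p.2 p.1, glue v p.1 p.2))
      = Prod.map ⇑e.symm ⇑e.symm ∘
        (fun q : (_ × _) × _ × _ => ((q.2.1, q.1.2), (q.1.1, q.2.2))) ∘ Prod.map ⇑e ⇑e := by
    funext p
    refine Prod.ext ?_ ?_ <;> funext j <;> by_cases h : j ∈ v <;>
      simp [glue, h, hedef, MeasurableEquiv.piEquivPiSubtypeProd, Equiv.piEquivPiSubtypeProd]
  rw [h4]
  exact htot

def phi {d : ℕ} (a b : Finset (Fin d))
    (ω : (Fin d → ℝ) × (Fin d → ℝ) × (Fin d → ℝ)) :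
    (Fin d → ℝ) × (Fin d → ℝ) × (Fin d → ℝ) :=
  (glue (b \ a) ω.2.2 (glue (a \ b) ω.2.1 ω.1),
    (glue (a \ b) ω.1 ω.2.1, glue (b \ a) (glue (a \ b) ω.2.1 ω.1) ω.2.2))

theorem phi_mp {d : ℕ} (a b : Finset (Fin d)) :
    MeasurePreserving (phi a b)
      ((unifCube d).prod ((unifCube d).prod (unifCube d)))
      ((unifCube d).prod ((unifCube d).prod (unifCube d))) := by
  set ν := unifCube d with hν
  have c1 := (measurePreserving_prodAssoc ν ν ν).symm MeasurableEquiv.prodAssoc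
  have c2 := (swapGlue_mp (a \ b)).prod (MeasurePreserving.id ν)
  have c3 := measurePreserving_prodAssoc ν ν ν
  have c4 := (MeasurePreserving.id ν).prod (Measure.measurePreserving_swap (μ:=ν) (ν:=ν))
  have c5 := (measurePreserving_prodAssoc ν ν ν).symm MeasurableEquiv.prodAssoc
  have c6 := (swapGlue_mp (b \ a)).prod (MeasurePreserving.id ν)
  have c7 := measurePreserving_prodAssoc ν ν ν
  have c8 := (MeasurePreserving.id ν).prod (Measure.measurePreserving_swap (μ:=ν) (ν:=ν))
  exact c8.comp (c7.comp (c6.comp (c5.comp (c4.comp (c3.comp (c2.comp c1))))))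

theorem glue_key1 {d : ℕ} (a b : Finset (Fin d)) (x z w : Fin d → ℝ) :
    glue (a ∩ b) (glue (b \ a) w (glue (a \ b) z x)) (glue (a \ b) x z) = glue a x z := by
  funext j
  by_cases ha : j ∈ a <;> by_cases hb : j ∈ b <;>
    simp [glue, Finset.mem_inter, Finset.mem_sdiff, ha, hb]

theorem glue_key2 {d : ℕ} (a b : Finset (Fin d)) (x z w : Fin d → ℝ) :
    glue (a ∩ b) (glue (b \ a) w (glue (a \ b) z x))
      (glue (b \ a) (glue (a \ b) z x) w) = glue b x w := by
  funext j
  by_cases ha : j ∈ a <;> by_cases hb : j ∈ b <;>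
    simp [glue, Finset.mem_inter, Finset.mem_sdiff, ha, hb]

theorem stmt9' {d : ℕ} (hd : 1 ≤ d) (f : (Fin d → ℝ) → ℝ)
    (hf : MemLp f 2 (unifCube d)) (a b : Finset (Fin d)) :
    (∫ x, ∫ z, ∫ w, f (glue a x z) * f (glue b x w)
        ∂(unifCube d) ∂(unifCube d) ∂(unifCube d))
      = (∫ x, f x ∂(unifCube d)) ^ 2 +
        ((∫ x, (∫ y, f (glue (a ∩ b) x y) ∂(unifCube d)) ^ 2 ∂(unifCube d))
          - (∫ x, f x ∂(unifCube d)) ^ 2) := by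
  classical
  set ν := unifCube d with hν
  haveI : IsProbabilityMeasure ν := by rw [hν]; infer_instance
  set s := a ∩ b with hs
  have hone : (1 : ENNReal)/1 = 1/2 + 1/2 := by
    rw [ENNReal.add_halves]; norm_num
  have hρ1 : MeasurePreserving
      (fun ω : (Fin d → ℝ) × (Fin d → ℝ) × (Fin d → ℝ) => (ω.1, ω.2.1))
      (ν.prod (ν.prod ν)) (ν.prod ν) := (MeasurePreserving.id ν).prod (mp_fst ν ν)
  have hρ2 : MeasurePreserving
      (fun ω : (Fin d → ℝ) × (Fin d → ℝ) × (Fin d → ℝ) => (ω.1, ω.2.2))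
      (ν.prod (ν.prod ν)) (ν.prod ν) := (MeasurePreserving.id ν).prod (mp_snd ν ν)
  have hmem : ∀ u : Finset (Fin d), MemLp
      (fun ω : (Fin d → ℝ) × (Fin d → ℝ) × (Fin d → ℝ) => f (glue u ω.1 ω.2.1)) 2
      (ν.prod (ν.prod ν)) := fun u =>
    (hf.comp_measurePreserving (glue_mp u)).comp_measurePreserving hρ1
  have hmem' : ∀ u : Finset (Fin d), MemLp
      (fun ω : (Fin d → ℝ) × (Fin d → ℝ) × (Fin d → ℝ) => f (glue u ω.1 ω.2.2)) 2
      (ν.prod (ν.prod ν)) := fun u =>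
    (hf.comp_measurePreserving (glue_mp u)).comp_measurePreserving hρ2
  have hint : ∀ u v : Finset (Fin d), Integrable
      (fun ω : (Fin d → ℝ) × (Fin d → ℝ) × (Fin d → ℝ) =>
        f (glue u ω.1 ω.2.1) * f (glue v ω.1 ω.2.2)) (ν.prod (ν.prod ν)) := by
    intro u v
    exact memLp_one_iff_integrable.mp ((hmem' v).smul (hmem u))
  -- Step 1: iterated integral to product integral
  have e1 : (∫ x, ∫ z, ∫ w, f (glue a x z) * f (glue b x w) ∂ν ∂ν ∂ν)
      = ∫ ω, f (glue a ω.1 ω.2.1) * f (glue b ω.1 ω.2.2) ∂(ν.prod (ν.prod ν)) := by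
    rw [integral_prod _ (hint a b)]
    refine integral_congr_ae ?_
    filter_upwards [(hint a b).prod_right_ae] with x hx
    exact (integral_prod _ hx).symm
  -- Step 2: change of variables by phi
  have e2 : (∫ ω, f (glue a ω.1 ω.2.1) * f (glue b ω.1 ω.2.2) ∂(ν.prod (ν.prod ν)))
      = ∫ ω, f (glue s ω.1 ω.2.1) * f (glue s ω.1 ω.2.2) ∂(ν.prod (ν.prod ν)) := by
    have hcomp : (fun ω : (Fin d → ℝ) × (Fin d → ℝ) × (Fin d → ℝ) =>
        f (glue a ω.1 ω.2.1) * f (glue b ω.1 ω.2.2))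
        = (fun ω : (Fin d → ℝ) × (Fin d → ℝ) × (Fin d → ℝ) =>
            f (glue s ω.1 ω.2.1) * f (glue s ω.1 ω.2.2)) ∘ phi a b := by
      funext ω
      show f (glue a ω.1 ω.2.1) * f (glue b ω.1 ω.2.2)
        = f (glue s (phi a b ω).1 (phi a b ω).2.1) * f (glue s (phi a b ω).1 (phi a b ω).2.2)
      rw [hs]
      unfold phi
      rw [glue_key1 a b ω.1 ω.2.1 ω.2.2, glue_key2 a b ω.1 ω.2.1 ω.2.2]
    rw [hcomp]
    exact mp_integral (phi_mp a b) (hint s s).aestronglyMeasurable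
  -- Step 3: product integral to square of inner integral
  have e3 : (∫ ω, f (glue s ω.1 ω.2.1) * f (glue s ω.1 ω.2.2) ∂(ν.prod (ν.prod ν)))
      = ∫ x, (∫ y, f (glue s x y) ∂ν) ^ 2 ∂ν := by
    rw [integral_prod _ (hint s s)]
    refine integral_congr_ae (Filter.Eventually.of_forall fun x => ?_)
    show (∫ y : (Fin d → ℝ) × (Fin d → ℝ),
        f (glue s x y.1) * f (glue s x y.2) ∂(ν.prod ν)) = _
    rw [integral_prod_mul (μ := ν) (ν := ν)
      (fun z => f (glue s x z)) (fun w => f (glue s x w))]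
    exact (pow_two _).symm
  rw [e1, e2, e3]
  ring

theorem stmt9 {d : ℕ} (hd : 1 ≤ d) (f : (Fin d → ℝ) → ℝ)
    (hf : MemLp f 2 (unifCube d)) (a b : Finset (Fin d)) :
    (∫ x, ∫ z, ∫ w, f (glue a x z) * f (glue b x w)
        ∂(unifCube d) ∂(unifCube d) ∂(unifCube d))
      = (∫ x, f x ∂(unifCube d)) ^ 2 + lowerSobol f (a ∩ b) := by
  have h := stmt9' hd f hf a b
  rw [lowerSobol]
  exact h
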